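/- If a finite set S of vectors in ℝ² has more than 6 elements, all with norms less than ε, then one can replace S by a strictly smaller multiset C of vectors, each of norm less than ε, such that every element of C is either an element of S or a difference u - v of two elements of S, and every signed sum achievable from C is achievable from S by a choice of signs. -/

import Mathlib

/-- `x` is a signed sum achievable from the multiset `M`: there is an ordering of `M`
and signs `±1` whose signed sum equals `x`. -/
def AchievableSum (M : Multiset (EuclideanSpace ℝ (Fin 2)))
    (x : EuclideanSpace ℝ (Fin 2)) : Prop :=
  ∃ l : List (EuclideanSpace ℝ (Fin 2)), (l : Multiset (EuclideanSpace ℝ (Fin 2))) = M ∧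
    ∃ s : List ℝ, s.length = l.length ∧ (∀ c ∈ s, c = 1 ∨ c = -1) ∧
      (List.zipWith (fun (c : ℝ) (v : EuclideanSpace ℝ (Fin 2)) => c • v) s l).sum = x

open Real

abbrev E2 := EuclideanSpace ℝ (Fin 2)


/-- sector index of an angle -/
noncomputable def secArg (x : ℝ) : ℤ := ⌊(x + π) * 3 / π⌋

lemma secArg_nonneg {x : ℝ} (hx : -π < x) : 0 ≤ secArg x := by
  have hπ := Real.pi_pos
  apply Int.floor_nonneg.2
  have : 0 ≤ (x + π) * 3 := by nlinarith
  positivity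

lemma secArg_le_six {x : ℝ} (hx : x ≤ π) : secArg x ≤ 6 := by
  have hπ := Real.pi_pos
  have hv : (x + π) * 3 / π ≤ 6 := by rw [div_le_iff₀ hπ]; nlinarith
  have := Int.floor_le_floor (R := ℝ) hv
  simpa [secArg] using this

lemma secArg_eq_six {x : ℝ} (hx : x ≤ π) (h : secArg x = 6) : x = π := by
  have hπ := Real.pi_pos
  unfold secArg at h
  have h1 : (6 : ℝ) ≤ (x + π) * 3 / π := by
    have := Int.floor_le ((x + π) * 3 / π)
    rw [h] at this; exact_mod_cast this
  rw [le_div_iff₀ hπ] at h1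
  nlinarith

lemma abs_lt_of_floor_eq {a b : ℝ} (h : ⌊a⌋ = ⌊b⌋) : |a - b| < 1 := by
  have h1 := Int.floor_le a
  have h2 := Int.floor_le b
  have h3 := Int.lt_floor_add_one a
  have h4 := Int.lt_floor_add_one b
  rw [h] at h1 h3
  rw [abs_lt]; constructor <;> linarith

lemma cos_ge_half_of_abs_le {d : ℝ} (h : |d| ≤ π / 3) : 1/2 ≤ Real.cos d := by
  have hπ := Real.pi_pos
  have : Real.cos (π/3) ≤ Real.cos |d| :=
    Real.cos_le_cos_of_nonneg_of_le_pi (abs_nonneg d) (by linarith) h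
  rw [Real.cos_abs] at this
  rw [Real.cos_pi_div_three] at this
  linarith

lemma cos_ge_half {x y : ℝ} (hx1 : -π < x) (hx2 : x ≤ π) (hy1 : -π < y) (hy2 : y ≤ π)
    (h : secArg x % 6 = secArg y % 6) : 1/2 ≤ Real.cos (x - y) := by
  have hπ := Real.pi_pos
  have hx0 := secArg_nonneg hx1
  have hx6 := secArg_le_six hx2
  have hy0 := secArg_nonneg hy1
  have hy6 := secArg_le_six hy2
  rcases eq_or_ne (secArg x) (secArg y) with heq | hne
  · -- same floor
    unfold secArg at heq
    have habs : |(x + π) * 3 / π - (y + π) * 3 / π| < 1 := abs_lt_of_floor_eq heq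
    apply cos_ge_half_of_abs_le
    have : (x + π) * 3 / π - (y + π) * 3 / π = (x - y) * 3 / π := by ring
    rw [this, abs_div, abs_of_pos hπ, div_lt_one hπ] at habs
    rw [abs_le]
    rw [abs_lt] at habs
    cases habs with
    | intro h1 h2 =>
      constructor <;> nlinarith [abs_nonneg (x - y), le_abs_self (x-y), neg_abs_le (x-y)]
  · -- wrap-around case: one of them is 6, the other 0
    have : (secArg x = 6 ∧ secArg y = 0) ∨ (secArg x = 0 ∧ secArg y = 6) := by omega
    have key : ∀ a b : ℝ, -π < a → a ≤ π → -π < b → b ≤ π → secArg a = 6 → secArg b = 0 →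
        1/2 ≤ Real.cos (a - b) := by
      intro a b ha1 ha2 hb1 hb2 ha6 hb0
      have hab : a = π := secArg_eq_six ha2 ha6
      unfold secArg at hb0
      have hb : (b + π) * 3 / π < 1 := by
        have := Int.lt_floor_add_one ((b + π) * 3 / π)
        rw [hb0] at this; push_cast at this; linarith
      rw [div_lt_one hπ] at hb
      have hd : Real.cos (a - b) = Real.cos (a - b - 2*π) := by
        rw [← Real.cos_add_two_pi (a - b - 2*π)]; ring_nf
      rw [hd]
      apply cos_ge_half_of_abs_le
      rw [abs_le]
      constructor <;> [skip; skip] <;> subst hab <;> nlinarith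
    rcases this with ⟨h1, h2⟩ | ⟨h1, h2⟩
    · exact key x y hx1 hx2 hy1 hy2 h1 h2
    · rw [show x - y = -(y - x) by ring, Real.cos_neg]
      exact key y x hy1 hy2 hx1 hx2 h2 h1

lemma close_of_sec_eq (a b : ℂ)
    (h : secArg a.arg % 6 = secArg b.arg % 6) :
    ‖a - b‖ ≤ max (‖a‖) (‖b‖) := by
  have hc := cos_ge_half (Complex.neg_pi_lt_arg a) (Complex.arg_le_pi a)
    (Complex.neg_pi_lt_arg b) (Complex.arg_le_pi b) h
  have hre : a.re * b.re + a.im * b.im =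
      ‖a‖ * ‖b‖ * Real.cos (a.arg - b.arg) := by
    rw [Real.cos_sub, ← Complex.norm_mul_cos_arg a, ← Complex.norm_mul_sin_arg a,
      ← Complex.norm_mul_cos_arg b, ← Complex.norm_mul_sin_arg b]
    ring
  have hinner : ‖a‖ * ‖b‖ / 2 ≤ a.re * b.re + a.im * b.im := by
    rw [hre]
    have h0 : 0 ≤ ‖a‖ * ‖b‖ := by positivity
    nlinarith
  set m := max (‖a‖) (‖b‖) with hm
  have ham : ‖a‖ ≤ m := le_max_left _ _
  have hbm : ‖b‖ ≤ m := le_max_right _ _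
  have hm0 : 0 ≤ m := le_trans (norm_nonneg a) ham
  have hsq : ‖a - b‖ ^ 2 ≤ m ^ 2 := by
    have e1 : ‖a - b‖ ^ 2 = (a.re - b.re)^2 + (a.im - b.im)^2 := by
      rw [Complex.sq_norm, Complex.normSq_apply, Complex.sub_re, Complex.sub_im]; ring
    have e2 : ‖a‖ ^ 2 = a.re^2 + a.im^2 := by
      rw [Complex.sq_norm, Complex.normSq_apply]; ring
    have e3 : ‖b‖ ^ 2 = b.re^2 + b.im^2 := by
      rw [Complex.sq_norm, Complex.normSq_apply]; ring
    rcases max_cases (‖a‖) (‖b‖) with ⟨hmax, _⟩ | ⟨hmax, _⟩ <;>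
      rw [hm, hmax] <;>
      nlinarith [norm_nonneg a, norm_nonneg b]
  nlinarith [norm_nonneg (a - b)]

/-- the complex number associated to a planar vector -/
noncomputable def toC (u : EuclideanSpace ℝ (Fin 2)) : ℂ := ⟨u 0, u 1⟩

lemma norm_toC (u : EuclideanSpace ℝ (Fin 2)) : ‖toC u‖ = ‖u‖ := by
  rw [EuclideanSpace.norm_eq, Complex.norm_def, Complex.normSq_apply]
  simp [toC, Fin.sum_univ_two, sq_abs]
  ring_nf

lemma toC_sub (u v : EuclideanSpace ℝ (Fin 2)) : toC (u - v) = toC u - toC v := by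
  simp [toC, Complex.ext_iff]

lemma close_vec (u v : EuclideanSpace ℝ (Fin 2))
    (h : secArg (toC u).arg % 6 = secArg (toC v).arg % 6) :
    ‖u - v‖ ≤ max ‖u‖ ‖v‖ := by
  rw [← norm_toC, ← norm_toC, ← norm_toC, toC_sub]
  exact close_of_sec_eq _ _ h

lemma zip_one_sum (l : List E2) :
    (List.zipWith (fun (c : ℝ) (v : E2) => c • v) (List.replicate l.length 1) l).sum = l.sum := by
  induction l with
  | nil => simp
  | cons a l ih => simp [List.replicate_succ, ih]

lemma zip_neg_sum (l : List E2) :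
    (List.zipWith (fun (c : ℝ) (v : E2) => c • v) (List.replicate l.length (-1)) l).sum
      = -l.sum := by
  induction l with
  | nil => simp
  | cons a l ih => simp [List.replicate_succ, ih]; abel

lemma achievable_iff (M : Multiset E2) (x : E2) :
    AchievableSum M x ↔ ∃ P N : Multiset E2, P + N = M ∧ x = P.sum - N.sum := by
  constructor
  · rintro ⟨l, hl, s, hlen, hsign, hsum⟩
    subst hl hsum
    induction l generalizing s with
    | nil =>
      refine ⟨0, 0, by simp, by simp [List.length_eq_zero_iff.mp hlen]⟩
    | cons a l ih =>
      match s, hlen with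
      | c :: s, hlen =>
        have hlen' : s.length = l.length := by simpa using hlen
        obtain ⟨P, N, hPN, hx⟩ := ih s hlen' (fun d hd => hsign d (List.mem_cons_of_mem _ hd))
        rcases hsign c List.mem_cons_self with hc | hc
        · refine ⟨a ::ₘ P, N, ?_, ?_⟩
          · rw [← Multiset.cons_coe, ← hPN]; simp [Multiset.cons_add]
          · simp [hc, ← hx, add_sub_assoc]
        · refine ⟨P, a ::ₘ N, ?_, ?_⟩
          · rw [← Multiset.cons_coe, ← hPN]
            simp [Multiset.add_cons, Multiset.cons_add]
          · simp [hc, hx]; abel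
  · rintro ⟨P, N, hPN, hx⟩
    refine ⟨P.toList ++ N.toList, ?_, List.replicate P.toList.length 1 ++
      List.replicate N.toList.length (-1), by simp, ?_, ?_⟩
    · rw [← Multiset.coe_add, Multiset.coe_toList, Multiset.coe_toList]; exact hPN
    · intro c hc
      rcases List.mem_append.mp hc with h | h
      · exact Or.inl (List.eq_of_mem_replicate h)
      · exact Or.inr (List.eq_of_mem_replicate h)
    · rw [List.zipWith_append (by simp), List.sum_append, zip_one_sum, zip_neg_sum,
        Multiset.sum_toList, Multiset.sum_toList]
      rw [hx]; abel

/-- sector of a planar vector, as an element of `Fin 6` -/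
noncomputable def sec6 (u : E2) : Fin 6 :=
  ⟨(secArg (toC u).arg % 6).toNat, by
    have h1 : 0 ≤ secArg (toC u).arg := secArg_nonneg (Complex.neg_pi_lt_arg _)
    have h2 : secArg (toC u).arg % 6 < 6 := Int.emod_lt_of_pos _ (by norm_num)
    have h3 : 0 ≤ secArg (toC u).arg % 6 := Int.emod_nonneg _ (by norm_num)
    omega⟩

theorem stmt5 (S : Multiset (EuclideanSpace ℝ (Fin 2))) (ε : ℝ)
    (hcard : 6 < Multiset.card S) (hS : ∀ x ∈ S, ‖x‖ < ε) :
    ∃ C : Multiset (EuclideanSpace ℝ (Fin 2)),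
      Multiset.card C < Multiset.card S ∧
      (∀ c ∈ C, ‖c‖ < ε) ∧
      (∀ c ∈ C, c ∈ S ∨ ∃ u ∈ S, ∃ v ∈ S, c = u - v) ∧
      ∀ x, AchievableSum C x → AchievableSum S x := by
  classical
  -- pigeonhole: two vectors in the same sector
  set l := S.toList with hl
  have hlen : l.length = Multiset.card S := Multiset.length_toList S
  have h7 : 7 ≤ l.length := by omega
  obtain ⟨i, j, hij, hfij⟩ := Fintype.exists_ne_map_eq_of_card_lt
    (fun i : Fin 7 => sec6 (l.get ⟨i.1, by omega⟩)) (by simp)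
  set i' : Fin l.length := ⟨i.1, by omega⟩
  set j' : Fin l.length := ⟨j.1, by omega⟩
  have hij' : i' ≠ j' := by
    intro h; apply hij; apply Fin.ext
    simpa [i', j'] using congrArg Fin.val h
  set u := l.get i' with hu
  set v := l.get j' with hv
  have hsec : secArg (toC u).arg % 6 = secArg (toC v).arg % 6 := by
    have h1 : 0 ≤ secArg (toC u).arg % 6 := Int.emod_nonneg _ (by norm_num)
    have h2 : 0 ≤ secArg (toC v).arg % 6 := Int.emod_nonneg _ (by norm_num)
    have := congrArg Fin.val hfij
    simp only [sec6] at this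
    omega
  have huS : u ∈ S := by
    rw [← Multiset.coe_toList S]; exact Multiset.mem_coe.2 (List.get_mem l i')
  have hvS : v ∈ S := by
    rw [← Multiset.coe_toList S]; exact Multiset.mem_coe.2 (List.get_mem l j')
  have hvSu : v ∈ S.erase u := by
    rcases eq_or_ne u v with he | hne
    · -- duplicate: count ≥ 2
      have hdup : l.Duplicate u := by
        rcases lt_or_gt_of_ne hij' with h | h
        · exact List.duplicate_iff_exists_distinct_get.2 ⟨i', j', h, rfl, he⟩
        · exact List.duplicate_iff_exists_distinct_get.2 ⟨j', i', h, he, rfl⟩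
      have h2 : 2 ≤ l.count u := List.duplicate_iff_two_le_count.1 hdup
      have hcount : 2 ≤ S.count u := by
        rwa [← Multiset.coe_toList S, Multiset.coe_count]
      rw [← he, ← Multiset.count_pos, Multiset.count_erase_self]
      omega
    · exact (Multiset.mem_erase_of_ne hne.symm).2 hvS
  -- the construction
  set M0 := (S.erase u).erase v with hM0
  have hSE : S = u ::ₘ v ::ₘ M0 := by
    rw [hM0, Multiset.cons_erase hvSu, Multiset.cons_erase huS]
  refine ⟨(u - v) ::ₘ M0, ?_, ?_, ?_, ?_⟩
  · have h1 : Multiset.card (S.erase u) = Multiset.card S - 1 :=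
      Multiset.card_erase_of_mem huS
    have h2 : Multiset.card M0 = Multiset.card (S.erase u) - 1 :=
      Multiset.card_erase_of_mem hvSu
    simp only [Multiset.card_cons]
    omega
  · intro c hc
    rcases Multiset.mem_cons.1 hc with rfl | hc
    · calc ‖u - v‖ ≤ max ‖u‖ ‖v‖ := close_vec u v hsec
        _ < ε := max_lt (hS u huS) (hS v hvS)
    · exact hS c (Multiset.mem_of_mem_erase (Multiset.mem_of_mem_erase hc))
  · intro c hc
    rcases Multiset.mem_cons.1 hc with rfl | hc
    · exact Or.inr ⟨u, huS, v, hvS, rfl⟩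
    · exact Or.inl (Multiset.mem_of_mem_erase (Multiset.mem_of_mem_erase hc))
  · intro x hx
    rw [achievable_iff] at hx ⊢
    obtain ⟨P, N, hPN, hxs⟩ := hx
    have hmem : u - v ∈ P + N := by rw [hPN]; exact Multiset.mem_cons_self _ _
    rcases Multiset.mem_add.1 hmem with hm | hm
    · set P' := P.erase (u - v) with hP'
      have hPe : P = (u - v) ::ₘ P' := (Multiset.cons_erase hm).symm
      have hPN' : P' + N = M0 := by
        have : (u - v) ::ₘ (P' + N) = (u - v) ::ₘ M0 := by
          rw [← hPN, hPe, Multiset.cons_add]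
        exact (Multiset.cons_inj_right _).1 this
      refine ⟨u ::ₘ P', v ::ₘ N, ?_, ?_⟩
      · rw [hSE, ← hPN']
        rw [Multiset.cons_add, Multiset.add_cons]
      · rw [hxs, hPe]
        simp only [Multiset.sum_cons]
        abel
    · set N' := N.erase (u - v) with hN'
      have hNe : N = (u - v) ::ₘ N' := (Multiset.cons_erase hm).symm
      have hPN' : P + N' = M0 := by
        have : (u - v) ::ₘ (P + N') = (u - v) ::ₘ M0 := by
          rw [← hPN, hNe]
          simp [Multiset.add_cons, Multiset.cons_add]
        exact (Multiset.cons_inj_right _).1 this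
      refine ⟨v ::ₘ P, u ::ₘ N', ?_, ?_⟩
      · rw [hSE, ← hPN']
        rw [Multiset.cons_add, Multiset.add_cons]
        rw [Multiset.cons_swap]
      · rw [hxs, hNe]
        simp only [Multiset.sum_cons]
        abel
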